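/- Assume the pure peakon assumption. Then for every 1 ≤ k ≤ n, the function z ↦ B_n(z)/A_n(z) − s_{21}(z)/s_{11}(z) is O(1/z^k) as z → +∞ (big-O with respect to the filter at +∞ on the reals). -/

import Mathlib

open Matrix

/-- The 3×3 matrix `S(x,m;z) = I − z·m·v(x)·w(x)ᵀ` with
`v(x) = (e^{−x}, −2, e^{x})ᵀ` and `w(x) = (e^{x}, 1, e^{−x})ᵀ`. -/
noncomputable def Speak (x m z : ℝ) : Matrix (Fin 3) (Fin 3) ℝ :=
  1 - (z * m) • vecMulVec ![Real.exp (-x), -2, Real.exp x] ![Real.exp x, 1, Real.exp (-x)]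

/-- `S_{[n,k]}(z) = S_n(z) · S_{n−1}(z) ⋯ S_{n−k+1}(z)`, where `S_j(z) = S(x_j, m_j; z)`. -/
noncomputable def Sblock (x m : ℕ → ℝ) (n k : ℕ) (z : ℝ) : Matrix (Fin 3) (Fin 3) ℝ :=
  ((List.range k).map (fun i => Speak (x (n - i)) (m (n - i)) z)).prod

/-- The vector `(A_j(z), B_j(z), C_j(z))ᵀ = S_j(z) · S_{j−1}(z) ⋯ S_1(z) · (1,0,0)ᵀ`. -/
noncomputable def ABCvec (x m : ℕ → ℝ) (j : ℕ) (z : ℝ) : Fin 3 → ℝ :=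
  (((List.range j).map (fun i => Speak (x (j - i)) (m (j - i)) z)).prod).mulVec ![1, 0, 0]

namespace WeylAux

open Polynomial Asymptotics Filter

noncomputable def vv (x : ℝ) : Fin 3 → ℝ := ![Real.exp (-x), -2, Real.exp x]
noncomputable def ww (x : ℝ) : Fin 3 → ℝ := ![Real.exp x, 1, Real.exp (-x)]

/-- polynomial version of `Speak` -/
noncomputable def Pm (x m : ℝ) : Matrix (Fin 3) (Fin 3) ℝ[X] :=
  fun i j => C (if i = j then 1 else 0) + C (-m * (vv x i * ww x j)) * X

lemma Pm_apply (x m : ℝ) (i j : Fin 3) :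
    Pm x m i j = C (if i = j then 1 else 0) + C (-m * (vv x i * ww x j)) * X := rfl

noncomputable def Qp (x m : ℕ → ℝ) (n k : ℕ) : Matrix (Fin 3) (Fin 3) ℝ[X] :=
  ((List.range k).map (fun i => Pm (x (n - i)) (m (n - i)))).prod

lemma eval_Pm (x m z : ℝ) : (Pm x m).map (eval z) = Speak x m z := by
  ext i j
  fin_cases i <;> fin_cases j <;>
    simp [Pm, Speak, Matrix.sub_apply, Matrix.smul_apply, vecMulVec_apply, Matrix.one_apply,
      Matrix.map_apply, vv, ww, smul_eq_mul] <;> ring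

lemma eval_Qp (x m : ℕ → ℝ) (n k : ℕ) (z : ℝ) :
    (Qp x m n k).map (eval z) = Sblock x m n k z := by
  have h : (Qp x m n k).map (eval z) = (evalRingHom z).mapMatrix (Qp x m n k) := rfl
  rw [h, Qp, map_list_prod, Sblock, List.map_map]
  congr 1
  apply List.map_congr_left
  intro i _
  simp only [Function.comp_apply, RingHom.mapMatrix_apply]
  exact eval_Pm _ _ _

lemma Qp_succ (x m : ℕ → ℝ) (n k : ℕ) :
    Qp x m n (k + 1) = Qp x m n k * Pm (x (n - k)) (m (n - k)) := by
  simp [Qp, List.range_succ]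

lemma deg_Pm (x m : ℝ) (i j : Fin 3) : ((Pm x m) i j).natDegree ≤ 1 := by
  rw [Pm_apply]
  refine (natDegree_add_le _ _).trans (max_le ?_ ?_)
  · split <;> simp
  · exact natDegree_mul_le.trans
      (by simp only [natDegree_C, natDegree_X, zero_add, le_refl])

lemma coeff_Pm_one (x m : ℝ) (i j : Fin 3) :
    ((Pm x m) i j).coeff 1 = -m * (vv x i * ww x j) := by
  rw [Pm_apply]
  rcases eq_or_ne i j with h | h <;> simp [h, coeff_C, coeff_one]

lemma deg_mul {M N : Matrix (Fin 3) (Fin 3) ℝ[X]} {a b : ℕ}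
    (hM : ∀ i j, (M i j).natDegree ≤ a) (hN : ∀ i j, (N i j).natDegree ≤ b) :
    ∀ i j, ((M * N) i j).natDegree ≤ a + b := by
  intro i j
  rw [Matrix.mul_apply]
  refine natDegree_sum_le_of_forall_le _ _ fun l _ => ?_
  exact natDegree_mul_le.trans (add_le_add (hM i l) (hN l j))

lemma deg_Qp (x m : ℕ → ℝ) (n k : ℕ) : ∀ i j, ((Qp x m n k) i j).natDegree ≤ k := by
  induction k with
  | zero =>
    intro i j
    simp only [Qp, List.range_zero, List.map_nil, List.prod_nil]
    rcases eq_or_ne i j with h | h <;> simp [Matrix.one_apply, h]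
  | succ k ih =>
    rw [Qp_succ]
    exact deg_mul ih (deg_Pm _ _)

lemma coeff_matrix_mul {M N : Matrix (Fin 3) (Fin 3) ℝ[X]} {a b : ℕ}
    (hM : ∀ i j, (M i j).natDegree ≤ a) (hN : ∀ i j, (N i j).natDegree ≤ b) (i j : Fin 3) :
    ((M * N) i j).coeff (a + b) = ∑ l, (M i l).coeff a * (N l j).coeff b := by
  rw [Matrix.mul_apply, finset_sum_coeff]
  exact Finset.sum_congr rfl fun l _ => coeff_mul_add_eq_of_natDegree_le (hM i l) (hN l j)

lemma deg_aff (p q r s p' q' r' s' : ℝ) (h : p' * q' = r' * s') :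
    ((C p + C p' * X) * (C q + C q' * X)
      - (C r + C r' * X) * (C s + C s' * X)).natDegree ≤ 1 := by
  have e : (C p + C p' * X) * (C q + C q' * X) - (C r + C r' * X) * (C s + C s' * X)
      = C (p * q - r * s)
        + C (p * q' + p' * q - r * s' - r' * s) * X
        + C (p' * q' - r' * s') * X ^ 2 := by
    simp only [map_sub, map_add, _root_.map_mul]
    ring
  rw [e, h, sub_self, map_zero, zero_mul, add_zero]
  refine (natDegree_add_le _ _).trans (max_le ?_ ?_)
  · rw [natDegree_C]; exact Nat.zero_le _
  · exact natDegree_mul_le.trans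
      (by simp only [natDegree_C, natDegree_X, zero_add, le_refl])

lemma fin3_mk2 (h : 2 < 3) : (⟨2, h⟩ : Fin 3) = 2 := rfl

set_option maxHeartbeats 1000000 in
lemma adj_Pm_deg (x m : ℝ) (i j : Fin 3) :
    ((Pm x m).adjugate i j).natDegree ≤ 1 := by
  rw [Matrix.adjugate_fin_three]
  fin_cases i <;> fin_cases j <;>
    simp only [Matrix.of_apply, Matrix.cons_val', Matrix.cons_val_zero, Matrix.cons_val_one,
      Matrix.head_cons, Matrix.empty_val', Matrix.cons_val_fin_one, Matrix.head_fin_const,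
      Matrix.cons_val_two, Matrix.tail_cons, Fin.isValue, Fin.zero_eta, Fin.mk_one, fin3_mk2] <;>
    simp only [Pm] <;>
    first
      | (rw [neg_add_eq_sub]; apply deg_aff; ring)
      | (apply deg_aff; ring)

lemma adj_Qp_deg (x m : ℕ → ℝ) (n k : ℕ) :
    ∀ i j, ((Qp x m n k).adjugate i j).natDegree ≤ k := by
  induction k with
  | zero =>
    intro i j
    simp only [Qp, List.range_zero, List.map_nil, List.prod_nil, Matrix.adjugate_one]
    rcases eq_or_ne i j with h | h <;> simp [Matrix.one_apply, h]
  | succ k ih =>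
    rw [Qp_succ, Matrix.adjugate_mul_distrib]
    intro i j
    simpa [Nat.add_comm] using deg_mul (adj_Pm_deg _ _) ih i j

lemma Qp_split (x m : ℕ → ℝ) (n k : ℕ) (hkn : k ≤ n) :
    Qp x m n n = Qp x m n k * Qp x m (n - k) (n - k) := by
  unfold Qp
  have h1 : List.range n = List.range k ++ (List.range (n - k)).map (k + ·) := by
    rw [← List.range_add, Nat.add_sub_cancel' hkn]
  rw [h1, List.map_append, List.prod_append, List.map_map]
  congr 2
  apply List.map_congr_left
  intro i _
  simp only [Function.comp_apply]
  have h2 : n - (k + i) = n - k - i := by omega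
  rw [h2]

lemma exp_comb_pos {t : ℝ} (ht : 0 < t) : 0 < Real.exp t + Real.exp (-t) - 2 := by
  have h1 : 1 < Real.exp t := Real.one_lt_exp_iff.mpr ht
  have ha : 0 < Real.exp t := Real.exp_pos t
  have h2 : 0 < (Real.exp t - 1) ^ 2 := pow_pos (by linarith) 2
  have h3 : Real.exp t + Real.exp (-t) - 2 = (Real.exp t - 1) ^ 2 / Real.exp t := by
    rw [Real.exp_neg]
    field_simp
    ring
  rw [h3]
  exact div_pos h2 ha

lemma top_coeff (x m : ℕ → ℝ) (n : ℕ) (hn : 1 ≤ n)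
    (hm : ∀ i, 1 ≤ i → i ≤ n → 0 < m i)
    (hx : ∀ i, 1 ≤ i → i < n → x i < x (i + 1)) :
    ∀ k, 1 ≤ k → k ≤ n → ∃ c : ℝ, c ≠ 0 ∧
      ∀ i j, (Qp x m n k i j).coeff k = c * (vv (x n) i * ww (x (n - k + 1)) j) := by
  intro k
  induction k with
  | zero => intro h; exact absurd h (by omega)
  | succ k ih =>
    intro _ hk1n
    by_cases hk0 : k = 0
    · subst hk0
      refine ⟨-(m n), neg_ne_zero.mpr (hm n hn le_rfl).ne', fun i j => ?_⟩
      have h1 : Qp x m n 1 = Pm (x n) (m n) := by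
        simp [Qp, List.range_succ]
      have h2 : n - 1 + 1 = n := by omega
      rw [h1, h2, coeff_Pm_one]
    · have hk : 1 ≤ k := Nat.one_le_iff_ne_zero.mpr hk0
      obtain ⟨c, hc, htop⟩ := ih hk (by omega)
      have hidx1 : 1 ≤ n - k := by omega
      have hxx : x (n - k) < x (n - k + 1) := hx (n - k) hidx1 (by omega)
      have hm' : 0 < m (n - k) := hm (n - k) hidx1 (by omega)
      have hdpos : 0 < Real.exp (x (n - k + 1) - x (n - k))
          + Real.exp (x (n - k) - x (n - k + 1)) - 2 := by
        have h := exp_comb_pos (t := x (n - k + 1) - x (n - k)) (by linarith)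
        rw [neg_sub] at h
        exact h
      refine ⟨c * (-(m (n - k)) * (Real.exp (x (n - k + 1) - x (n - k))
          + Real.exp (x (n - k) - x (n - k + 1)) - 2)),
        mul_ne_zero hc (mul_ne_zero (neg_ne_zero.mpr hm'.ne') hdpos.ne'), fun i j => ?_⟩
      have e1 : (Qp x m n (k + 1) i j).coeff (k + 1)
          = ∑ l, (Qp x m n k i l).coeff k * ((Pm (x (n - k)) (m (n - k))) l j).coeff 1 := by
        rw [Qp_succ]
        exact coeff_matrix_mul (deg_Qp x m n k) (deg_Pm _ _) i j
      have h2 : n - (k + 1) + 1 = n - k := by omega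
      rw [e1, h2]
      simp only [htop, coeff_Pm_one]
      rw [Fin.sum_univ_three]
      have hw0 : ww (x (n - k + 1)) 0 = Real.exp (x (n - k + 1)) := rfl
      have hw1 : ww (x (n - k + 1)) 1 = 1 := rfl
      have hw2 : ww (x (n - k + 1)) 2 = Real.exp (-(x (n - k + 1))) := rfl
      have hv0 : vv (x (n - k)) 0 = Real.exp (-(x (n - k))) := rfl
      have hv1 : vv (x (n - k)) 1 = -2 := rfl
      have hv2 : vv (x (n - k)) 2 = Real.exp (x (n - k)) := rfl
      rw [hw0, hw1, hw2, hv0, hv1, hv2]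
      have hA : Real.exp (x (n - k + 1) - x (n - k))
          = Real.exp (x (n - k + 1)) * Real.exp (-(x (n - k))) := by
        rw [← Real.exp_add]; ring_nf
      have hB : Real.exp (x (n - k) - x (n - k + 1))
          = Real.exp (-(x (n - k + 1))) * Real.exp (x (n - k)) := by
        rw [← Real.exp_add]; ring_nf
      rw [hA, hB]
      ring

lemma coeff_Qp00_ne (x m : ℕ → ℝ) (n : ℕ) (hn : 1 ≤ n)
    (hm : ∀ i, 1 ≤ i → i ≤ n → 0 < m i)
    (hx : ∀ i, 1 ≤ i → i < n → x i < x (i + 1))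
    (k : ℕ) (hk1 : 1 ≤ k) (hkn : k ≤ n) : (Qp x m n k 0 0).coeff k ≠ 0 := by
  obtain ⟨c, hc, htop⟩ := top_coeff x m n hn hm hx k hk1 hkn
  rw [htop 0 0]
  have h0 : vv (x n) 0 = Real.exp (-(x n)) := rfl
  have h1 : ww (x (n - k + 1)) 0 = Real.exp (x (n - k + 1)) := rfl
  rw [h0, h1]
  positivity

end WeylAux

theorem weyl_approx_B (n : ℕ) (hn : 1 ≤ n) (x m : ℕ → ℝ)
    (hm : ∀ i, 1 ≤ i → i ≤ n → 0 < m i)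
    (hx : ∀ i, 1 ≤ i → i < n → x i < x (i + 1))
    (k : ℕ) (hk1 : 1 ≤ k) (hkn : k ≤ n) :
    (fun z : ℝ => ABCvec x m n z 1 / ABCvec x m n z 0
        - Sblock x m n k z 1 0 / Sblock x m n k z 0 0)
      =O[Filter.atTop] (fun z : ℝ => 1 / z ^ k) := by
  classical
  open WeylAux Polynomial Asymptotics Filter in
  -- leading coefficients
  have hca := WeylAux.coeff_Qp00_ne x m n hn hm hx n hn le_rfl
  have hcp := WeylAux.coeff_Qp00_ne x m n hn hm hx k hk1 hkn
  have ha0 : Qp x m n n 0 0 ≠ 0 := fun h => hca (by rw [h]; simp)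
  have hp0 : Qp x m n k 0 0 ≠ 0 := fun h => hcp (by rw [h]; simp)
  have hadeg : (Qp x m n n 0 0).natDegree = n :=
    le_antisymm (WeylAux.deg_Qp x m n n 0 0) (Polynomial.le_natDegree_of_ne_zero hca)
  have hpdeg : (Qp x m n k 0 0).natDegree = k :=
    le_antisymm (WeylAux.deg_Qp x m n k 0 0) (Polynomial.le_natDegree_of_ne_zero hcp)
  -- the numerator polynomial and its degree bound
  have hsplit := WeylAux.Qp_split x m n k hkn
  have hN : Qp x m n n 1 0 * Qp x m n k 0 0 - Qp x m n n 0 0 * Qp x m n k 1 0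
      = (Qp x m n k).adjugate 2 2 * Qp x m (n - k) (n - k) 1 0
        - (Qp x m n k).adjugate 1 2 * Qp x m (n - k) (n - k) 2 0 := by
    rw [hsplit, Matrix.adjugate_fin_three]
    simp only [Matrix.of_apply, Matrix.cons_val', Matrix.cons_val_zero, Matrix.cons_val_one,
      Matrix.head_cons, Matrix.empty_val', Matrix.cons_val_fin_one, Matrix.head_fin_const,
      Matrix.cons_val_two, Matrix.tail_cons, Fin.isValue, Matrix.mul_apply, Fin.sum_univ_three]
    ring
  have hNdeg : (Qp x m n n 1 0 * Qp x m n k 0 0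
      - Qp x m n n 0 0 * Qp x m n k 1 0).natDegree ≤ n := by
    rw [hN]
    refine (Polynomial.natDegree_sub_le _ _).trans (max_le ?_ ?_) <;>
      refine Polynomial.natDegree_mul_le.trans ?_
    · have h1 := WeylAux.adj_Qp_deg x m n k 2 2
      have h2 := WeylAux.deg_Qp x m (n - k) (n - k) 1 0
      omega
    · have h1 := WeylAux.adj_Qp_deg x m n k 1 2
      have h2 := WeylAux.deg_Qp x m (n - k) (n - k) 2 0
      omega
  -- rewrite the target in polynomial form
  have hfun : (fun z : ℝ => ABCvec x m n z 1 / ABCvec x m n z 0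
        - Sblock x m n k z 1 0 / Sblock x m n k z 0 0)
      = fun z : ℝ => eval z (Qp x m n n 1 0) / eval z (Qp x m n n 0 0)
          - eval z (Qp x m n k 1 0) / eval z (Qp x m n k 0 0) := by
    funext z
    have h3 : ∀ (kk : ℕ) (i j : Fin 3), Sblock x m n kk z i j = eval z (Qp x m n kk i j) := by
      intro kk i j; rw [← WeylAux.eval_Qp]; rfl
    have h1 : ∀ i : Fin 3, ABCvec x m n z i = eval z (Qp x m n n i 0) := by
      intro i
      have h2 : ABCvec x m n z i = (Sblock x m n n z).mulVec ![1, 0, 0] i := rfl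
      rw [h2]
      simp only [Matrix.mulVec, dotProduct, Fin.sum_univ_three]
      rw [h3 n i 0, h3 n i 1, h3 n i 2]
      norm_num [Matrix.cons_val_two]
    rw [h1, h1, h3, h3]
  rw [hfun]
  -- reduce to a ratio of evaluated polynomials, eventually
  have heq : (fun z : ℝ => eval z (Qp x m n n 1 0) / eval z (Qp x m n n 0 0)
          - eval z (Qp x m n k 1 0) / eval z (Qp x m n k 0 0))
      =ᶠ[Filter.atTop] fun z : ℝ =>
        eval z (Qp x m n n 1 0 * Qp x m n k 0 0 - Qp x m n n 0 0 * Qp x m n k 1 0)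
          / eval z (Qp x m n n 0 0 * Qp x m n k 0 0) := by
    filter_upwards [(Qp x m n n 0 0).eventually_no_roots ha0,
      (Qp x m n k 0 0).eventually_no_roots hp0] with z hza hzp
    rw [div_sub_div _ _ hza hzp, Polynomial.eval_sub, Polynomial.eval_mul,
      Polynomial.eval_mul, Polynomial.eval_mul]
  refine heq.trans_isBigO ?_
  -- numerator is O(z^n)
  have h1 : (fun z : ℝ => eval z (Qp x m n n 1 0 * Qp x m n k 0 0
      - Qp x m n n 0 0 * Qp x m n k 1 0)) =O[Filter.atTop] fun z : ℝ => z ^ n := by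
    have hdle : (Qp x m n n 1 0 * Qp x m n k 0 0
        - Qp x m n n 0 0 * Qp x m n k 1 0).degree ≤ ((X : ℝ[X]) ^ n).degree := by
      rw [Polynomial.degree_X_pow]
      exact Polynomial.natDegree_le_iff_degree_le.mp hNdeg
    simpa using Polynomial.isBigO_of_degree_le _ _ hdle
  -- denominator: exact degree n + k
  have hD0 : Qp x m n n 0 0 * Qp x m n k 0 0 ≠ 0 := mul_ne_zero ha0 hp0
  have hDdeg : (Qp x m n n 0 0 * Qp x m n k 0 0).natDegree = n + k := by
    rw [Polynomial.natDegree_mul ha0 hp0, hadeg, hpdeg]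
  have h2 : (fun z : ℝ => z ^ (n + k)) =O[Filter.atTop]
      fun z : ℝ => eval z (Qp x m n n 0 0 * Qp x m n k 0 0) := by
    have hlead : (Qp x m n n 0 0 * Qp x m n k 0 0).leadingCoeff ≠ 0 :=
      Polynomial.leadingCoeff_ne_zero.mpr hD0
    have hequiv := (Qp x m n n 0 0 * Qp x m n k 0 0).isEquivalent_atTop_lead
    rw [hDdeg] at hequiv
    exact ((Asymptotics.isBigO_refl (fun z : ℝ => z ^ (n + k)) Filter.atTop).const_mul_right
      hlead).trans hequiv.symm.isBigO
  have h3 : (fun z : ℝ => (eval z (Qp x m n n 0 0 * Qp x m n k 0 0))⁻¹)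
      =O[Filter.atTop] fun z : ℝ => (z ^ (n + k))⁻¹ := by
    refine h2.inv_rev ?_
    filter_upwards [Filter.eventually_gt_atTop (0 : ℝ)] with z hz h
    exact absurd h (pow_ne_zero _ hz.ne')
  have h4 : (fun z : ℝ =>
      eval z (Qp x m n n 1 0 * Qp x m n k 0 0 - Qp x m n n 0 0 * Qp x m n k 1 0)
        / eval z (Qp x m n n 0 0 * Qp x m n k 0 0))
      =O[Filter.atTop] fun z : ℝ => z ^ n * (z ^ (n + k))⁻¹ := by
    simpa [div_eq_mul_inv] using h1.mul h3
  refine h4.trans (Filter.EventuallyEq.isBigO ?_)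
  filter_upwards [Filter.eventually_gt_atTop (0 : ℝ)] with z hz
  rw [pow_add, one_div, mul_inv, ← mul_assoc, mul_inv_cancel₀ (pow_ne_zero _ hz.ne'), one_mul]
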